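/- arXiv:2510.06033 — 2 statements merged into one kernel-verified Lean document; each statement's English description precedes it below -/
import Mathlib

section
/- Assume the passing structure and suppose the joint optimality equation admits a solution (g, h). Then for every state s ∈ S: (i) for every deterministic step-independent atomic policy π̃, limsup_{T→∞} (1/T) Σ_{t=0}^{T−1} (P_π̃^t r_π̃)(s) ≤ g; (ii) there exists a deterministic step-independent atomic policy π̃* such that lim_{T→∞} (1/T) Σ_{t=0}^{T−1} (P_{π̃*}^t r_{π̃*})(s) = g for every s ∈ S; and (iii) for every deterministic joint policy σ, limsup_{T→∞} (1/T) Σ_{t=0}^{T−1} (P_σ^t r_σ)(s) ≤ g, with equality (as a limit) for some deterministic joint policy. Consequently, the supremum of long-run average rewards over deterministic step-independent atomic policies equals the supremum over deterministic joint policies, and both equal g (Theorem 2: the optimal long-run average reward of step-independent atomic policies equals that of the original joint policies). -/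
open Filter Finset Matrix

/-- The state reached after `n` atomic steps following the action sequence `a` from `s`. -/
def rollSeq {S A : Type*} (T : S → A → S) (s : S) (a : ℕ → A) : ℕ → S
  | 0 => s
  | n + 1 => T (rollSeq T s a n) (a n)

/-- The first `K` entries of the action sequence `a` form a feasible atomic sequence at `s`. -/
def FeasibleSeq {S A : Type*} (T : S → A → S) (As : S → Finset A) (K : ℕ) (s : S)
    (a : ℕ → A) : Prop :=
  ∀ k, k < K → a k ∈ As (rollSeq T s a k)

/-- Post-decision state of an atomic sequence. -/
def postState {S A : Type*} (T : S → A → S) (K : ℕ) (s : S) (a : ℕ → A) : S :=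
  rollSeq T s a K

/-- Reward of an atomic sequence. -/
def seqReward {S A : Type*} (T : S → A → S) (rhat : A → ℝ) (rH : S → ℝ) (K : ℕ) (s : S)
    (a : ℕ → A) : ℝ :=
  (∑ k ∈ Finset.range K, rhat (a k)) + rH (rollSeq T s a K)

/-- A row-stochastic matrix. -/
def RowStochastic {S : Type*} [Fintype S] (P : Matrix S S ℝ) : Prop :=
  (∀ s s', 0 ≤ P s s') ∧ ∀ s, ∑ s', P s s' = 1

/-- Transition matrix of a deterministic joint policy. -/
def jointP {S A : Type*} (T : S → A → S) (Psys : Matrix S S ℝ) (K : ℕ) (σ : S → ℕ → A) :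
    Matrix S S ℝ :=
  Matrix.of fun s s' => Psys (postState T K s (σ s)) s'

/-- Per-period reward vector of a deterministic joint policy. -/
def jointR {S A : Type*} (T : S → A → S) (rhat : A → ℝ) (rH : S → ℝ) (K : ℕ)
    (σ : S → ℕ → A) (s : S) : ℝ :=
  seqReward T rhat rH K s (σ s)

/-- Rollout states of a step-dependent atomic policy. -/
def rollDep {S A : Type*} (T : S → A → S) (μ : ℕ → S → A) (s : S) : ℕ → S
  | 0 => s
  | n + 1 => T (rollDep T μ s n) (μ n (rollDep T μ s n))

/-- Transition matrix of a deterministic step-dependent atomic policy. -/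
def depP {S A : Type*} (T : S → A → S) (Psys : Matrix S S ℝ) (K : ℕ) (μ : ℕ → S → A) :
    Matrix S S ℝ :=
  Matrix.of fun s s' => Psys (rollDep T μ s K) s'

/-- Per-period reward vector of a deterministic step-dependent atomic policy. -/
def depR {S A : Type*} (T : S → A → S) (rhat : A → ℝ) (rH : S → ℝ) (K : ℕ)
    (μ : ℕ → S → A) (s : S) : ℝ :=
  (∑ k ∈ Finset.range K, rhat (μ k (rollDep T μ s k))) + rH (rollDep T μ s K)

/-- Transition matrix of a deterministic step-independent atomic policy. -/
def indP {S A : Type*} (T : S → A → S) (Psys : Matrix S S ℝ) (K : ℕ) (pol : S → A) :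
    Matrix S S ℝ :=
  depP T Psys K fun _ => pol

/-- Per-period reward vector of a deterministic step-independent atomic policy. -/
def indR {S A : Type*} (T : S → A → S) (rhat : A → ℝ) (rH : S → ℝ) (K : ℕ)
    (pol : S → A) (s : S) : ℝ :=
  depR T rhat rH K (fun _ => pol) s

/-- `n`-horizon average reward from state `s` under transition matrix `P` and reward `r`. -/
noncomputable def avgRew {S : Type*} [Fintype S] [DecidableEq S] (P : Matrix S S ℝ)
    (r : S → ℝ) (s : S) (n : ℕ) : ℝ :=
  (n : ℝ)⁻¹ * ∑ t ∈ Finset.range n, ((P ^ t) *ᵥ r) s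

/-- The joint optimality equation for `(g, h)`. -/
def JointOptEq {S A : Type*} [Fintype S] (T : S → A → S) (As : S → Finset A) (rhat : A → ℝ)
    (rH : S → ℝ) (Psys : Matrix S S ℝ) (K : ℕ) (g : ℝ) (h : S → ℝ) : Prop :=
  ∀ s, IsGreatest {x : ℝ | ∃ a : ℕ → A, FeasibleSeq T As K s a ∧
    x = seqReward T rhat rH K s a - g + ∑ s', Psys (postState T K s a) s' * h s'} (h s)

/-- The atomic optimality equations, with atomic steps indexed `0, …, K-1`. -/
def AtomicOptEq {S A : Type*} [Fintype S] (T : S → A → S) (As : S → Finset A) (rhat : A → ℝ)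
    (rH : S → ℝ) (Psys : Matrix S S ℝ) (K : ℕ) (g : ℝ) (hhat : ℕ → S → ℝ) : Prop :=
  (∀ k, k + 1 < K → ∀ s, IsGreatest
      {x : ℝ | ∃ a ∈ As s, x = rhat a - g / (K : ℝ) + hhat (k + 1) (T s a)} (hhat k s)) ∧
  ∀ s, IsGreatest
      {x : ℝ | ∃ a ∈ As s,
        x = rhat a - g / (K : ℝ) + rH (T s a) + ∑ s', Psys (T s a) s' * hhat 0 s'}
      (hhat (K - 1) s)

/-- The passing structure: a distinguished passing action and an idle count. -/
def PassingStruct {S A : Type*} (T : S → A → S) (As : S → Finset A) (rhat : A → ℝ) (K : ℕ)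
    (pass : A) (ι : S → ℕ) : Prop :=
  (∀ s, pass ∈ As s) ∧ (∀ s, T s pass = s) ∧ rhat pass = 0 ∧ (∀ s, ι s ≤ K) ∧
  (∀ s, ∀ a ∈ As s, a ≠ pass → 1 ≤ ι s ∧ ι (T s a) = ι s - 1) ∧
  ∀ s, ι s = 0 → As s = {pass}

/-- The passing-last equation of `h̃` relative to `(g, h)`. -/
def PassLastEq {S A : Type*} [Fintype S] [DecidableEq A] (T : S → A → S) (As : S → Finset A)
    (rhat : A → ℝ) (rH : S → ℝ) (Psys : Matrix S S ℝ) (pass : A) (g : ℝ)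
    (h htil : S → ℝ) : Prop :=
  ∀ s, IsGreatest {x : ℝ | ∃ a ∈ As s,
    x = if a = pass then rH s - g + ∑ s', Psys s s' * h s'
        else rhat a + htil (T s a)} (htil s)

set_option linter.unusedSectionVars false
section Aux
variable {S : Type*} [Fintype S] [DecidableEq S]

lemma RowStochastic.pow {P : Matrix S S ℝ} (hP : RowStochastic P) (n : ℕ) :
    RowStochastic (P ^ n) := by
  induction n with
  | zero =>
    refine ⟨fun s s' => ?_, fun s => ?_⟩
    · rw [pow_zero, Matrix.one_apply]; positivity
    · simp [pow_zero, Matrix.one_apply]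
  | succ n ih =>
    rw [pow_succ]
    refine ⟨fun s s' => ?_, fun s => ?_⟩
    · rw [Matrix.mul_apply]
      exact Finset.sum_nonneg fun t _ => mul_nonneg (ih.1 s t) (hP.1 t s')
    · simp only [Matrix.mul_apply]
      rw [Finset.sum_comm]
      calc ∑ t, ∑ s', (P ^ n) s t * P t s' = ∑ t, (P ^ n) s t * ∑ s', P t s' := by
            simp [Finset.mul_sum]
        _ = 1 := by simp [hP.2, ih.2 s]

lemma mulVec_mono {P : Matrix S S ℝ} (hP : RowStochastic P) {v w : S → ℝ}
    (h : ∀ s, v s ≤ w s) (s : S) : (P *ᵥ v) s ≤ (P *ᵥ w) s :=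
  Finset.sum_le_sum fun t _ => mul_le_mul_of_nonneg_left (h t) (hP.1 s t)

lemma mulVec_const {P : Matrix S S ℝ} (hP : RowStochastic P) (c : ℝ) :
    P *ᵥ (fun _ => c) = fun _ => c := by
  funext s
  show ∑ t, P s t * c = c
  rw [← Finset.sum_mul, hP.2 s, one_mul]

lemma abs_mulVec_le {P : Matrix S S ℝ} (hP : RowStochastic P) {v : S → ℝ} {M : ℝ}
    (h : ∀ t, |v t| ≤ M) (s : S) : |(P *ᵥ v) s| ≤ M := by
  have : |(P *ᵥ v) s| ≤ ∑ t, P s t * M := by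
    refine (Finset.abs_sum_le_sum_abs _ _).trans (Finset.sum_le_sum fun t _ => ?_)
    rw [abs_mul, abs_of_nonneg (hP.1 s t)]
    exact mul_le_mul_of_nonneg_left (h t) (hP.1 s t)
  calc |(P *ᵥ v) s| ≤ ∑ t, P s t * M := this
    _ = M := by rw [← Finset.sum_mul, hP.2 s, one_mul]

lemma abs_le_sum_abs (v : S → ℝ) (u : S) : |v u| ≤ ∑ t, |v t| :=
  Finset.single_le_sum (fun t _ => abs_nonneg (v t)) (Finset.mem_univ u)

lemma sum_le_of_bellman {P : Matrix S S ℝ} (hP : RowStochastic P) {r h : S → ℝ} {g : ℝ}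
    (hle : ∀ s, r s + (P *ᵥ h) s ≤ g + h s) (n : ℕ) (s : S) :
    ∑ t ∈ Finset.range n, ((P ^ t) *ᵥ r) s ≤ n * g + h s - ((P ^ n) *ᵥ h) s := by
  induction n with
  | zero => simp [Matrix.one_mulVec]
  | succ n ih =>
    rw [Finset.sum_range_succ]
    have h1 : ((P ^ n) *ᵥ r) s ≤ g + ((P ^ n) *ᵥ h) s - ((P ^ (n + 1)) *ᵥ h) s := by
      have hmono := mulVec_mono (hP.pow n)
        (v := r) (w := fun u => g + (h u - (P *ᵥ h) u))
        (fun u => by show r u ≤ g + (h u - (P *ᵥ h) u); linarith [hle u]) s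
      have heq : ((P ^ n) *ᵥ fun u => g + (h u - (P *ᵥ h) u)) s
          = g + (((P ^ n) *ᵥ h) s - ((P ^ (n + 1)) *ᵥ h) s) := by
        have : (fun u => g + (h u - (P *ᵥ h) u)) = (fun _ => g) + (h - P *ᵥ h) := rfl
        rw [this, Matrix.mulVec_add, Matrix.mulVec_sub, mulVec_const (hP.pow n),
          Matrix.mulVec_mulVec, ← pow_succ]
        simp
      rw [heq] at hmono
      linarith
    push_cast
    linarith

lemma sum_eq_of_bellman {P : Matrix S S ℝ} (hP : RowStochastic P) {r h : S → ℝ} {g : ℝ}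
    (hle : ∀ s, r s + (P *ᵥ h) s = g + h s) (n : ℕ) (s : S) :
    ∑ t ∈ Finset.range n, ((P ^ t) *ᵥ r) s = n * g + h s - ((P ^ n) *ᵥ h) s := by
  induction n with
  | zero => simp [Matrix.one_mulVec]
  | succ n ih =>
    rw [Finset.sum_range_succ]
    have h1 : ((P ^ n) *ᵥ r) s = g + ((P ^ n) *ᵥ h) s - ((P ^ (n + 1)) *ᵥ h) s := by
      have hre : r = (fun _ => g) + (h - P *ᵥ h) := by
        funext u
        have := hle u
        show r u = g + (h u - (P *ᵥ h) u)
        linarith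
      rw [hre, Matrix.mulVec_add, Matrix.mulVec_sub, mulVec_const (hP.pow n),
        Matrix.mulVec_mulVec, ← pow_succ]
      simp only [Pi.add_apply, Pi.sub_apply]
      ring
    push_cast
    linarith

lemma limsup_avg_le [Nonempty S] {P : Matrix S S ℝ} (hP : RowStochastic P) {r h : S → ℝ} {g : ℝ}
    (hle : ∀ s, r s + (P *ᵥ h) s ≤ g + h s) (s : S) :
    Filter.limsup (avgRew P r s) Filter.atTop ≤ g := by
  set Mh : ℝ := ∑ t, |h t| with hMh
  set Mr : ℝ := ∑ t, |r t| with hMr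
  have hMr0 : 0 ≤ Mr := Finset.sum_nonneg fun t _ => abs_nonneg _
  have hub : ∀ n : ℕ, 1 ≤ n → avgRew P r s n ≤ g + (h s + Mh) / n := by
    intro n hn
    have hpos : (0:ℝ) < n := by exact_mod_cast hn
    have hb := sum_le_of_bellman hP hle n s
    have hPn : -Mh ≤ ((P ^ n) *ᵥ h) s := by
      have := abs_mulVec_le (hP.pow n) (abs_le_sum_abs h) s
      rw [abs_le] at this; exact this.1
    have : ∑ t ∈ Finset.range n, ((P ^ t) *ᵥ r) s ≤ n * g + (h s + Mh) := by linarith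
    have := mul_le_mul_of_nonneg_left this (le_of_lt (inv_pos.mpr hpos))
    calc avgRew P r s n ≤ (n:ℝ)⁻¹ * (n * g + (h s + Mh)) := this
      _ = g + (h s + Mh) / n := by field_simp
  have hlb : ∀ n : ℕ, -Mr ≤ avgRew P r s n := by
    intro n
    rcases Nat.eq_zero_or_pos n with hn | hn
    · subst hn; simp [avgRew]; linarith
    · have hpos : (0:ℝ) < n := by exact_mod_cast hn
      have hsum : (n:ℝ) * (-Mr) ≤ ∑ t ∈ Finset.range n, ((P ^ t) *ᵥ r) s := by
        calc (n:ℝ) * (-Mr) = ∑ _t ∈ Finset.range n, (-Mr) := by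
              rw [Finset.sum_const, Finset.card_range]; ring
          _ ≤ _ := Finset.sum_le_sum fun t _ => by
              have := abs_mulVec_le (hP.pow t) (abs_le_sum_abs r) s
              rw [abs_le] at this; exact this.1
      have := mul_le_mul_of_nonneg_left hsum (le_of_lt (inv_pos.mpr hpos))
      calc -Mr = (n:ℝ)⁻¹ * ((n:ℝ) * (-Mr)) := by field_simp
        _ ≤ avgRew P r s n := this
  have hbt : Filter.Tendsto (fun n : ℕ => g + (h s + Mh) / n) Filter.atTop (nhds g) := by
    have := (tendsto_const_nhds (x := g) (f := Filter.atTop (α := ℕ))).add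
      (tendsto_const_div_atTop_nhds_zero_nat (h s + Mh))
    simpa using this
  calc Filter.limsup (avgRew P r s) Filter.atTop
      ≤ Filter.limsup (fun n : ℕ => g + (h s + Mh) / n) Filter.atTop := by
        refine Filter.limsup_le_limsup ?_ ?_ ?_
        · filter_upwards [Filter.eventually_ge_atTop 1] with n hn using hub n hn
        · exact Filter.isCoboundedUnder_le_of_le Filter.atTop hlb
        · exact hbt.isBoundedUnder_le
    _ = g := hbt.limsup_eq

lemma tendsto_avg [Nonempty S] {P : Matrix S S ℝ} (hP : RowStochastic P) {r h : S → ℝ} {g : ℝ}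
    (hle : ∀ s, r s + (P *ᵥ h) s = g + h s) (s : S) :
    Filter.Tendsto (avgRew P r s) Filter.atTop (nhds g) := by
  set Mh : ℝ := ∑ t, |h t| with hMh
  have hc : Filter.Tendsto (fun n : ℕ => g + (h s - ((P ^ n) *ᵥ h) s) / n)
      Filter.atTop (nhds g) := by
    have h0 : Filter.Tendsto (fun n : ℕ => (h s - ((P ^ n) *ᵥ h) s) / n)
        Filter.atTop (nhds 0) := by
      have habs : ∀ n : ℕ, |h s - ((P ^ n) *ᵥ h) s| ≤ |h s| + Mh := by
        intro n
        have h1 : |((P ^ n) *ᵥ h) s| ≤ Mh := abs_mulVec_le (hP.pow n) (abs_le_sum_abs h) s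
        rw [sub_eq_add_neg]
        refine (abs_add_le _ _).trans ?_
        rw [abs_neg]
        linarith
      refine squeeze_zero_norm (a := fun n : ℕ => (|h s| + Mh) / n) (fun n => ?_)
        (tendsto_const_div_atTop_nhds_zero_nat _)
      rcases Nat.eq_zero_or_pos n with hn | hn
      · subst hn; simp
      · have hpos : (0:ℝ) < n := by exact_mod_cast hn
        rw [Real.norm_eq_abs, abs_div, Nat.abs_cast]
        exact div_le_div_of_nonneg_right (habs n) (le_of_lt hpos)
    have := Filter.Tendsto.const_add g h0
    simpa using this
  refine Filter.Tendsto.congr' ?_ hc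
  filter_upwards [Filter.eventually_ge_atTop 1] with n hn
  have hpos : (0:ℝ) < n := by exact_mod_cast hn
  have hb := sum_eq_of_bellman hP hle n s
  show g + (h s - ((P ^ n) *ᵥ h) s) / n = avgRew P r s n
  rw [avgRew, hb]
  field_simp
  ring

end Aux

set_option linter.unusedSectionVars false

section AuxMDP

variable {S A : Type*}

lemma rollSeq_shift (T : S → A → S) (s : S) (a : ℕ → A) :
    ∀ n, rollSeq T s a (n + 1) = rollSeq T (T s (a 0)) (fun k => a (k + 1)) n := by
  intro n
  induction n with
  | zero => rfl
  | succ n ih => show T (rollSeq T s a (n + 1)) (a (n + 1)) = _; rw [ih]; rfl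

lemma rollSeq_of_pol (T : S → A → S) (pol : S → A) (s : S) :
    ∀ n, rollSeq T s (fun k => pol (rollDep T (fun _ => pol) s k)) n
      = rollDep T (fun _ => pol) s n := by
  intro n
  induction n with
  | zero => rfl
  | succ n ih =>
    show T (rollSeq T s _ n) (pol (rollDep T (fun _ => pol) s n)) = _
    rw [ih]; rfl

/-- Value function computed with a fuel parameter: with fuel `0` it is the pass value `pv`;
with fuel `n+1` it maximizes over available actions. -/
noncomputable def hfuel [DecidableEq A] (T : S → A → S) (As : S → Finset A)
    (hAs : ∀ s, (As s).Nonempty) (rhat : A → ℝ) (pass : A) (pv : S → ℝ) : ℕ → S → ℝ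
  | 0 => pv
  | n + 1 => fun s => (As s).sup' (hAs s)
      fun a => if a = pass then pv s else rhat a + hfuel T As hAs rhat pass pv n (T s a)

lemma exists_good_pol [Fintype S] [DecidableEq S]
    (T : S → A → S) (As : S → Finset A) (hAs : ∀ s, (As s).Nonempty)
    (rhat : A → ℝ) (rH : S → ℝ) (Psys : Matrix S S ℝ)
    (K : ℕ) (hK : 1 ≤ K) (pass : A) (ι : S → ℕ)
    (hpass : PassingStruct T As rhat K pass ι)
    (g : ℝ) (h : S → ℝ) (hopt : JointOptEq T As rhat rH Psys K g h) :
    ∃ pol : S → A, (∀ u, pol u ∈ As u) ∧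
      ∀ s, indR T rhat rH K pol s + ((indP T Psys K pol) *ᵥ h) s = g + h s := by
  classical
  obtain ⟨hpassmem, hTpass, hrpass, hιK, hdec, hι0⟩ := hpass
  set pv : S → ℝ := fun u => rH u - g + ∑ s', Psys u s' * h s' with hpv
  set F : ℕ → S → ℝ := hfuel T As hAs rhat pass pv with hF
  -- fuel stability
  have stab : ∀ n s, ι s ≤ n → F (n + 1) s = F n s := by
    intro n
    induction n with
    | zero =>
      intro s hs
      have hAseq : As s = {pass} := hι0 s (Nat.le_zero.mp hs)
      show (As s).sup' (hAs s) (fun a => if a = pass then pv s else _) = pv s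
      apply le_antisymm
      · apply Finset.sup'_le
        intro a ha
        rw [hAseq, Finset.mem_singleton] at ha
        rw [if_pos ha]
      · have := Finset.le_sup'
          (fun a => if a = pass then pv s else rhat a + F 0 (T s a)) (hpassmem s)
        simpa only [ite_true, eq_self_iff_true] using this
    | succ n ih =>
      intro s hs
      show (As s).sup' (hAs s) _ = (As s).sup' (hAs s) _
      apply Finset.sup'_congr _ rfl
      intro a ha
      by_cases hap : a = pass
      · simp [hap]
      · rw [if_neg hap, if_neg hap]
        congr 1
        have hd := hdec s a ha hap
        exact ih (T s a) (by omega)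
  set htil : S → ℝ := F K with hhtil
  have hfix : ∀ s, htil s = (As s).sup' (hAs s)
      fun a => if a = pass then pv s else rhat a + htil (T s a) := by
    intro s
    rw [hhtil, ← stab K s (hιK s)]
    rfl
  -- greedy policy
  have hchoice : ∀ s : S, ∃ a, a ∈ As s ∧
      (As s).sup' (hAs s) (fun a => if a = pass then pv s else rhat a + htil (T s a))
        = (if a = pass then pv s else rhat a + htil (T s a)) :=
    fun s => Finset.exists_mem_eq_sup' (hAs s) _
  choose pol hpolmem hpoleq using hchoice
  have greedy : ∀ u, htil u =
      if pol u = pass then pv u else rhat (pol u) + htil (T u (pol u)) :=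
    fun u => (hfix u).trans (hpoleq u)
  have ub : ∀ u, ∀ a ∈ As u,
      (if a = pass then pv u else rhat a + htil (T u a)) ≤ htil u := by
    intro u a ha
    rw [hfix u]
    exact Finset.le_sup' (fun a => if a = pass then pv u else rhat a + htil (T u a)) ha
  -- the greedy rollout path
  set path : S → ℕ → S := fun s => rollDep T (fun _ => pol) s with hpath
  have path_succ : ∀ s m, path s (m + 1) = T (path s m) (pol (path s m)) := fun s m => rfl
  -- telescoping invariant
  have inv : ∀ s m, htil s = (∑ k ∈ Finset.range m, rhat (pol (path s k))) + htil (path s m) := by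
    intro s m
    induction m with
    | zero => simp [hpath]; rfl
    | succ m ih =>
      rw [Finset.sum_range_succ]
      by_cases hp : pol (path s m) = pass
      · have : path s (m + 1) = path s m := by rw [path_succ, hp, hTpass]
        rw [this, hp, hrpass]
        linarith [ih]
      · have := greedy (path s m)
        rw [if_neg hp] at this
        rw [path_succ]
        linarith [ih]
  -- pass, once chosen, persists
  have pass_stays : ∀ s m, pol (path s m) = pass → ∀ j, path s (m + j) = path s m := by
    intro s m hm j
    induction j with
    | zero => rfl
    | succ j ih => rw [← Nat.add_assoc, path_succ, ih, hm, hTpass]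
  -- pass is chosen within K steps
  have exists_pass : ∀ s, ∃ m, m ≤ K ∧ pol (path s m) = pass := by
    intro s
    by_cases hc : ∃ k, k < K ∧ pol (path s k) = pass
    · obtain ⟨k, hk, hkp⟩ := hc
      exact ⟨k, le_of_lt hk, hkp⟩
    · push_neg at hc
      have count : ∀ m, m ≤ K → m ≤ ι s ∧ ι (path s m) = ι s - m := by
        intro m
        induction m with
        | zero => intro _; exact ⟨Nat.zero_le _, rfl⟩
        | succ m ih =>
          intro hm
          obtain ⟨h1, h2⟩ := ih (by omega)
          have hnp : pol (path s m) ≠ pass := hc m (by omega)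
          have hd := hdec (path s m) (pol (path s m)) (hpolmem _) hnp
          rw [← path_succ] at hd
          constructor
          · omega
          · omega
      obtain ⟨h1, h2⟩ := count K le_rfl
      have hz : ι (path s K) = 0 := by have := hιK s; omega
      have : pol (path s K) ∈ As (path s K) := hpolmem _
      rw [hι0 _ hz, Finset.mem_singleton] at this
      exact ⟨K, le_rfl, this⟩
  -- value at the end of the rollout
  have end_val : ∀ s, htil (path s K) = pv (path s K) := by
    intro s
    obtain ⟨m, hm, hmp⟩ := exists_pass s
    have hKm : path s K = path s m := by
      have := pass_stays s m hmp (K - m)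
      rwa [Nat.add_sub_cancel' hm] at this
    rw [hKm]
    have := greedy (path s m)
    rw [if_pos hmp] at this
    exact this
  have main : ∀ s, htil s
      = (∑ k ∈ Finset.range K, rhat (pol (path s k))) + pv (path s K) := by
    intro s
    rw [inv s K, end_val s]
  -- h ≤ htil : any feasible sequence value is dominated
  have seq_le : ∀ j (s : S) (a : ℕ → A), (∀ k, k < j → a k ∈ As (rollSeq T s a k)) →
      (∑ k ∈ Finset.range j, rhat (a k)) + pv (rollSeq T s a j) ≤ htil s := by
    intro j
    induction j with
    | zero =>
      intro s a _
      have := ub s pass (hpassmem s)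
      rw [if_pos rfl] at this
      simpa [rollSeq] using this
    | succ j ih =>
      intro s a hfe
      have h0 : a 0 ∈ As s := hfe 0 (Nat.succ_pos j)
      have hfe' : ∀ k, k < j →
          (fun k => a (k + 1)) k ∈ As (rollSeq T (T s (a 0)) (fun k => a (k + 1)) k) := by
        intro k hk
        rw [← rollSeq_shift]
        exact hfe (k + 1) (by omega)
      have IH := ih (T s (a 0)) (fun k => a (k + 1)) hfe'
      rw [Finset.sum_range_succ', rollSeq_shift]
      by_cases hp : a 0 = pass
      · rw [hp, hrpass, hTpass]
        rw [hp, hTpass] at IH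
        linarith [IH]
      · have := ub s (a 0) h0
        rw [if_neg hp] at this
        linarith [IH]
  have h_le : ∀ s, h s ≤ htil s := by
    intro s
    obtain ⟨a, hfe, heq⟩ := (hopt s).1
    have := seq_le K s a hfe
    rw [heq]
    simp only [seqReward, postState, hpv] at *
    linarith
  -- htil ≤ h : the greedy rollout is a feasible joint sequence
  have htil_le : ∀ s, htil s ≤ h s := by
    intro s
    apply (hopt s).2
    refine ⟨fun k => pol (path s k), ?_, ?_⟩
    · intro k hk
      rw [rollSeq_of_pol]
      exact hpolmem _
    · simp only [seqReward, postState, rollSeq_of_pol]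
      have := main s
      simp only [hpv] at this
      rw [this]
      rw [show rollSeq T s (fun k => pol (path s k)) K = path s K from rollSeq_of_pol T pol s K]
      ring
  have hh : ∀ s, htil s = h s := fun s => le_antisymm (htil_le s) (h_le s)
  refine ⟨pol, hpolmem, fun s => ?_⟩
  have him : indR T rhat rH K pol s
      = (∑ k ∈ Finset.range K, rhat (pol (path s k))) + rH (path s K) := rfl
  have hmv : ((indP T Psys K pol) *ᵥ h) s = ∑ s', Psys (path s K) s' * h s' := rfl
  have := main s
  rw [hh s] at this
  simp only [hpv] at this
  rw [him, hmv, this]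
  ring

end AuxMDP

/-- **Theorem 2** (atomic action decomposition, step-independent policies): under the passing
structure, if the joint optimality equation admits a solution `(g, h)`, then every deterministic
step-independent atomic policy and every deterministic joint policy has long-run average reward
at most `g`, both classes contain a policy attaining `g`, and both optimal long-run average
rewards equal `g`. -/
theorem stmt1 {S A : Type*} [Fintype S] [DecidableEq S] [Nonempty S] [Fintype A]
    (T : S → A → S) (As : S → Finset A) (hAs : ∀ s, (As s).Nonempty)
    (rhat : A → ℝ) (rH : S → ℝ) (Psys : Matrix S S ℝ) (hPsys : RowStochastic Psys)
    (K : ℕ) (hK : 1 ≤ K) (pass : A) (ι : S → ℕ)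
    (hpass : PassingStruct T As rhat K pass ι)
    (g : ℝ) (h : S → ℝ) (hopt : JointOptEq T As rhat rH Psys K g h) :
    ∀ s : S,
      (∀ pol : S → A, (∀ u, pol u ∈ As u) →
        Filter.limsup (avgRew (indP T Psys K pol) (indR T rhat rH K pol) s)
          Filter.atTop ≤ g) ∧
      (∃ pol : S → A, (∀ u, pol u ∈ As u) ∧
        ∀ u, Filter.Tendsto (avgRew (indP T Psys K pol) (indR T rhat rH K pol) u)
          Filter.atTop (nhds g)) ∧
      (∀ σ : S → ℕ → A, (∀ u, FeasibleSeq T As K u (σ u)) →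
        Filter.limsup (avgRew (jointP T Psys K σ) (jointR T rhat rH K σ) s)
          Filter.atTop ≤ g) ∧
      (∃ σ : S → ℕ → A, (∀ u, FeasibleSeq T As K u (σ u)) ∧
        ∀ u, Filter.Tendsto (avgRew (jointP T Psys K σ) (jointR T rhat rH K σ) u)
          Filter.atTop (nhds g)) ∧
      sSup {x : ℝ | ∃ pol : S → A, (∀ u, pol u ∈ As u) ∧
          x = Filter.limsup (avgRew (indP T Psys K pol) (indR T rhat rH K pol) s)
            Filter.atTop} = g ∧
      sSup {x : ℝ | ∃ σ : S → ℕ → A, (∀ u, FeasibleSeq T As K u (σ u)) ∧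
          x = Filter.limsup (avgRew (jointP T Psys K σ) (jointR T rhat rH K σ) s)
            Filter.atTop} = g := by
  classical
  -- generic joint-policy facts
  have hJstoch : ∀ σ : S → ℕ → A, RowStochastic (jointP T Psys K σ) :=
    fun σ => ⟨fun u u' => hPsys.1 _ _, fun u => hPsys.2 _⟩
  have hJbell : ∀ σ : S → ℕ → A, (∀ u, FeasibleSeq T As K u (σ u)) →
      ∀ u, jointR T rhat rH K σ u + ((jointP T Psys K σ) *ᵥ h) u ≤ g + h u := by
    intro σ hσ u
    have hmem := (hopt u).2 ⟨σ u, hσ u, rfl⟩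
    have hmv : ((jointP T Psys K σ) *ᵥ h) u
        = ∑ s', Psys (postState T K u (σ u)) s' * h s' := rfl
    rw [hmv, jointR]
    linarith
  have hJlimsup : ∀ σ : S → ℕ → A, (∀ u, FeasibleSeq T As K u (σ u)) → ∀ u,
      Filter.limsup (avgRew (jointP T Psys K σ) (jointR T rhat rH K σ) u)
        Filter.atTop ≤ g :=
    fun σ hσ u => limsup_avg_le (hJstoch σ) (hJbell σ hσ) u
  -- any step-independent policy induces a joint policy with identical dynamics
  have hconv : ∀ pol : S → A, (∀ u, pol u ∈ As u) →
      ∃ σ : S → ℕ → A, (∀ u, FeasibleSeq T As K u (σ u)) ∧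
        indP T Psys K pol = jointP T Psys K σ ∧
        indR T rhat rH K pol = jointR T rhat rH K σ := by
    intro pol hpol
    refine ⟨fun u k => pol (rollDep T (fun _ => pol) u k), fun u k hk => ?_, ?_, ?_⟩
    · rw [rollSeq_of_pol]; exact hpol _
    · funext u u'
      show Psys (rollDep T (fun _ => pol) u K) u' = Psys (rollSeq T u _ K) u'
      rw [rollSeq_of_pol]
    · funext u
      show _ = (∑ k ∈ Finset.range K, rhat (pol (rollDep T (fun _ => pol) u k)))
          + rH (rollSeq T u _ K)
      rw [rollSeq_of_pol]
      rfl
  have hIlimsup : ∀ pol : S → A, (∀ u, pol u ∈ As u) → ∀ u,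
      Filter.limsup (avgRew (indP T Psys K pol) (indR T rhat rH K pol) u)
        Filter.atTop ≤ g := by
    intro pol hpol u
    obtain ⟨σ, hσ, hP, hR⟩ := hconv pol hpol
    rw [hP, hR]
    exact hJlimsup σ hσ u
  -- the optimal step-independent policy
  obtain ⟨pol, hpolmem, hpolbell⟩ :=
    exists_good_pol T As hAs rhat rH Psys K hK pass ι hpass g h hopt
  have hIstoch : RowStochastic (indP T Psys K pol) :=
    ⟨fun u u' => hPsys.1 _ _, fun u => hPsys.2 _⟩
  have hItendsto : ∀ u,
      Filter.Tendsto (avgRew (indP T Psys K pol) (indR T rhat rH K pol) u)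
        Filter.atTop (nhds g) :=
    fun u => tendsto_avg hIstoch hpolbell u
  obtain ⟨σstar, hσstar, hPeq, hReq⟩ := hconv pol hpolmem
  have hJtendsto : ∀ u,
      Filter.Tendsto (avgRew (jointP T Psys K σstar) (jointR T rhat rH K σstar) u)
        Filter.atTop (nhds g) := by
    intro u
    rw [← hPeq, ← hReq]
    exact hItendsto u
  intro s
  refine ⟨fun pol' hpol' => hIlimsup pol' hpol' s, ⟨pol, hpolmem, hItendsto⟩,
    fun σ hσ => hJlimsup σ hσ s, ⟨σstar, hσstar, hJtendsto⟩, ?_, ?_⟩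
  · apply le_antisymm
    · apply csSup_le
      · exact ⟨_, pol, hpolmem, rfl⟩
      · rintro x ⟨pol', hpol', rfl⟩
        exact hIlimsup pol' hpol' s
    · apply le_csSup
      · exact ⟨g, by rintro x ⟨pol', hpol', rfl⟩; exact hIlimsup pol' hpol' s⟩
      · exact ⟨pol, hpolmem, ((hItendsto s).limsup_eq).symm⟩
  · apply le_antisymm
    · apply csSup_le
      · exact ⟨_, σstar, hσstar, rfl⟩
      · rintro x ⟨σ, hσ, rfl⟩
        exact hJlimsup σ hσ s
    · apply le_csSup
      · exact ⟨g, by rintro x ⟨σ, hσ, rfl⟩; exact hJlimsup σ hσ s⟩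
      · exact ⟨σstar, hσstar, ((hJtendsto s).limsup_eq).symm⟩
end

section
/- Let S be a nonempty finite type, let P be a row-stochastic real matrix indexed by S × S, let r : S → ℝ, g ∈ ℝ, and h : S → ℝ satisfy h(s) ≥ r(s) − g + (P h)(s) for every s ∈ S. Then for every s ∈ S, limsup_{T→∞} (1/T) Σ_{t=0}^{T−1} (P^t r)(s) ≤ g (a super-solution of the optimality equation bounds the long-run average reward of every policy from above). -/
open Filter Finset Matrix

lemma rowStochastic_mul {S : Type*} [Fintype S] {P Q : Matrix S S ℝ}
    (hP : RowStochastic P) (hQ : RowStochastic Q) : RowStochastic (P * Q) := by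
  constructor
  · intro s s'
    exact Finset.sum_nonneg fun k _ => mul_nonneg (hP.1 s k) (hQ.1 k s')
  · intro s
    simp only [Matrix.mul_apply]
    rw [Finset.sum_comm]
    simp_rw [← Finset.mul_sum, hQ.2, mul_one]
    exact hP.2 s

lemma rowStochastic_pow {S : Type*} [Fintype S] [DecidableEq S] {P : Matrix S S ℝ}
    (hP : RowStochastic P) (t : ℕ) : RowStochastic (P ^ t) := by
  induction t with
  | zero =>
    constructor
    · intro s s'
      simp [Matrix.one_apply]
      positivity
    · intro s; simp [Matrix.one_apply]
  | succ n ih =>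
    rw [pow_succ]
    exact rowStochastic_mul ih hP

lemma mulVec_le {S : Type*} [Fintype S] {Q : Matrix S S ℝ} (hQ : RowStochastic Q)
    {u v : S → ℝ} (huv : ∀ s, u s ≤ v s) (s : S) : (Q *ᵥ u) s ≤ (Q *ᵥ v) s := by
  apply Finset.sum_le_sum
  intro k _
  exact mul_le_mul_of_nonneg_left (huv k) (hQ.1 s k)

lemma abs_mulVec_le_s13 {S : Type*} [Fintype S] [Nonempty S] {Q : Matrix S S ℝ}
    (hQ : RowStochastic Q) (v : S → ℝ) (s : S) :
    |(Q *ᵥ v) s| ≤ Finset.univ.sup' Finset.univ_nonempty (fun k => |v k|) := by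
  set C := Finset.univ.sup' Finset.univ_nonempty (fun k => |v k|)
  calc |(Q *ᵥ v) s| ≤ ∑ k, |Q s k * v k| := Finset.abs_sum_le_sum_abs _ _
    _ ≤ ∑ k, Q s k * C := by
        apply Finset.sum_le_sum
        intro k _
        rw [abs_mul, abs_of_nonneg (hQ.1 s k)]
        exact mul_le_mul_of_nonneg_left
          (Finset.le_sup' (fun k => |v k|) (Finset.mem_univ k)) (hQ.1 s k)
    _ = C := by rw [← Finset.sum_mul, hQ.2, one_mul]

/-- A super-solution of the evaluation equation bounds the long-run average reward from above:
if `h ≥ r − g + P h` pointwise for a row-stochastic matrix `P`, then the limsup of the Cesàro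
averages of the expected rewards is at most `g` from every state. -/
theorem stmt13 {S : Type*} [Fintype S] [DecidableEq S] [Nonempty S]
    (P : Matrix S S ℝ) (hP : RowStochastic P) (r : S → ℝ) (g : ℝ) (h : S → ℝ)
    (hsuper : ∀ s, h s ≥ r s - g + (P *ᵥ h) s) :
    ∀ s : S, Filter.limsup
      (fun T : ℕ => (T : ℝ)⁻¹ * ∑ t ∈ Finset.range T, ((P ^ t) *ᵥ r) s)
      Filter.atTop ≤ g := by
  intro s
  set C := Finset.univ.sup' Finset.univ_nonempty (fun k => |h k|) with hC
  set Cr := Finset.univ.sup' Finset.univ_nonempty (fun k => |r k|) with hCr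
  -- step: pointwise bound after applying P^t
  have key : ∀ t : ℕ, ∀ s : S,
      ((P ^ t) *ᵥ r) s ≤ g + ((P ^ t) *ᵥ h) s - ((P ^ (t+1)) *ᵥ h) s := by
    intro t s
    have hQ := rowStochastic_pow hP t
    have hru : ∀ k, r k ≤ (fun k => g + h k - (P *ᵥ h) k) k := by
      intro k; have := hsuper k; dsimp; linarith
    have h1 : ((P ^ t) *ᵥ r) s ≤ ((P ^ t) *ᵥ (fun k => g + h k - (P *ᵥ h) k)) s :=
      mulVec_le hQ hru s
    have h2 : ((P ^ t) *ᵥ (fun k => g + h k - (P *ᵥ h) k)) s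
        = g + ((P ^ t) *ᵥ h) s - ((P ^ (t+1)) *ᵥ h) s := by
      have hcomp : (P ^ t) *ᵥ (P *ᵥ h) = (P ^ (t+1)) *ᵥ h := by
        rw [Matrix.mulVec_mulVec, ← pow_succ]
      have hrow := hQ.2 s
      have hc := congrFun hcomp s
      simp only [Matrix.mulVec, dotProduct] at hc ⊢
      rw [← hc]
      simp only [mul_add, mul_sub, Finset.sum_add_distrib, Finset.sum_sub_distrib,
        ← Finset.sum_mul, hrow, one_mul]
    linarith
  -- telescoping sum bound
  have sumbd : ∀ T : ℕ, ∑ t ∈ Finset.range T, ((P ^ t) *ᵥ r) s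
      ≤ T * g + h s + C := by
    intro T
    have tele : ∑ t ∈ Finset.range T, ((P ^ t) *ᵥ r) s
        ≤ T * g + (((P ^ 0) *ᵥ h) s - ((P ^ T) *ᵥ h) s) := by
      calc ∑ t ∈ Finset.range T, ((P ^ t) *ᵥ r) s
          ≤ ∑ t ∈ Finset.range T, (g + ((P ^ t) *ᵥ h) s - ((P ^ (t+1)) *ᵥ h) s) :=
            Finset.sum_le_sum fun t _ => key t s
        _ = T * g + (((P ^ 0) *ᵥ h) s - ((P ^ T) *ᵥ h) s) := by
            have : ∀ t ∈ Finset.range T,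
                (g + ((P ^ t) *ᵥ h) s - ((P ^ (t+1)) *ᵥ h) s)
                = g + (((P ^ t) *ᵥ h) s - ((P ^ (t+1)) *ᵥ h) s) := by
              intro t _; ring
            rw [Finset.sum_congr rfl this, Finset.sum_add_distrib,
              Finset.sum_range_sub' (fun t => ((P ^ t) *ᵥ h) s) T]
            simp [mul_comm]
    have hbd : -((P ^ T) *ᵥ h) s ≤ C := by
      have := abs_mulVec_le_s13 (rowStochastic_pow hP T) h s
      rw [abs_le] at this; linarith [this.1]
    have h0 : ((P ^ 0) *ᵥ h) s = h s := by simp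
    rw [h0] at tele
    linarith
  -- lower bound for coboundedness
  have sumlb : ∀ T : ℕ, -(T * Cr) ≤ ∑ t ∈ Finset.range T, ((P ^ t) *ᵥ r) s := by
    intro T
    have : ∀ t ∈ Finset.range T, -Cr ≤ ((P ^ t) *ᵥ r) s := by
      intro t _
      have := abs_mulVec_le_s13 (rowStochastic_pow hP t) r s
      rw [abs_le] at this; linarith [this.1]
    calc -(T * Cr) = ∑ _t ∈ Finset.range T, (-Cr) := by
          simp [mul_comm]
      _ ≤ _ := Finset.sum_le_sum this
  set f : ℕ → ℝ := fun T => (T : ℝ)⁻¹ * ∑ t ∈ Finset.range T, ((P ^ t) *ᵥ r) s with hf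
  set u : ℕ → ℝ := fun T => g + (T : ℝ)⁻¹ * (h s + C) with hu
  have hfu : ∀ᶠ T in atTop, f T ≤ u T := by
    filter_upwards [Filter.eventually_ge_atTop 1] with T hT
    have hTpos : (0 : ℝ) < T := by exact_mod_cast hT
    have := sumbd T
    have : f T ≤ (T : ℝ)⁻¹ * (T * g + h s + C) := by
      apply mul_le_mul_of_nonneg_left this (by positivity)
    calc f T ≤ (T : ℝ)⁻¹ * (T * g + h s + C) := this
      _ = u T := by rw [hu]; field_simp; ring
  have hu_tendsto : Tendsto u atTop (nhds g) := by
    have h1 : Tendsto (fun T : ℕ => (T : ℝ)⁻¹) atTop (nhds 0) :=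
      tendsto_inv_atTop_zero.comp tendsto_natCast_atTop_atTop
    have : Tendsto u atTop (nhds (g + 0 * (h s + C))) :=
      tendsto_const_nhds.add (h1.mul tendsto_const_nhds)
    simpa using this
  have hf_bdd : IsBoundedUnder (· ≥ ·) atTop f := by
    apply isBoundedUnder_of_eventually_ge (a := -Cr)
    filter_upwards [Filter.eventually_ge_atTop 1] with T hT
    have hTpos : (0 : ℝ) < T := by exact_mod_cast hT
    have := sumlb T
    have h2 : (T : ℝ)⁻¹ * (-(T * Cr)) ≤ f T :=
      mul_le_mul_of_nonneg_left this (by positivity)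
    have h3 : (T : ℝ)⁻¹ * (-(T * Cr)) = -Cr := by field_simp
    linarith [h3 ▸ h2]
  have hcob : IsCoboundedUnder (· ≤ ·) atTop f := hf_bdd.isCoboundedUnder_le
  have hub : IsBoundedUnder (· ≤ ·) atTop u := hu_tendsto.isBoundedUnder_le
  calc limsup f atTop ≤ limsup u atTop := Filter.limsup_le_limsup hfu hcob hub
    _ = g := hu_tendsto.limsup_eq
end
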